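/- Let G be a graph, M a maximum matching of G, and T a triangle in G such that μ(G) ≥ 3 + μ(G − V(T)). Then no edge of M has both endpoints in T, and every vertex of T is covered by M. -/

import Mathlib

open SimpleGraph

/-- The maximum matching number `μ(G)`: the greatest number of edges of a matching of `G`. -/
noncomputable def matchNum {V : Type*} (G : SimpleGraph V) : ℕ :=
  sSup {n | ∃ M : G.Subgraph, M.IsMatching ∧ M.edgeSet.ncard = n}

section Aux

variable {V : Type*} {G : SimpleGraph V} {M : G.Subgraph}

/-- If `v ∈ e` for an edge `e` of a subgraph, then `e = s(v, w)` for some `w` with `M.Adj v w`. -/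
lemma exists_adj_of_mem_edge {e : Sym2 V} (he : e ∈ M.edgeSet) {v : V} (hv : v ∈ e) :
    ∃ w, M.Adj v w ∧ e = s(v, w) := by
  induction e with
  | h u u' =>
    rw [SimpleGraph.Subgraph.mem_edgeSet] at he
    rcases Sym2.mem_iff.mp hv with rfl | rfl
    · exact ⟨u', he, rfl⟩
    · exact ⟨u, he.symm, Sym2.eq_swap⟩

/-- In a matching, an edge containing `v` with `M.Adj v w` must be `s(v, w)`. -/
lemma mem_edge_eq (hM : M.IsMatching) {e : Sym2 V} (he : e ∈ M.edgeSet)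
    {v w : V} (hv : v ∈ e) (hvw : M.Adj v w) : e = s(v, w) := by
  obtain ⟨w', hw', rfl⟩ := exists_adj_of_mem_edge he hv
  rw [(hM (M.edge_vert hvw)).unique hw' hvw]

/-- The number of matching edges meeting a set `W` is at most `|W|`. -/
lemma ncard_filter_le [Finite V] (hM : M.IsMatching) (W : Set V) :
    ({e ∈ M.edgeSet | ∃ v ∈ W, v ∈ e}).ncard ≤ W.ncard := by
  classical
  rcases Set.eq_empty_or_nonempty {e ∈ M.edgeSet | ∃ v ∈ W, v ∈ e} with h | ⟨e0, he0⟩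
  · simp [h]
  · have : Nonempty V := ⟨he0.2.choose⟩
    apply Set.ncard_le_ncard_of_injOn (fun e => Classical.epsilon (fun v => v ∈ W ∧ v ∈ e))
    · intro e he
      obtain ⟨v, hv1, hv2⟩ := he.2
      exact (Classical.epsilon_spec (p := fun v => v ∈ W ∧ v ∈ e) ⟨v, hv1, hv2⟩).1
    · intro e1 h1 e2 h2 heq
      obtain ⟨v1, hv11, hv12⟩ := h1.2
      obtain ⟨v2, hv21, hv22⟩ := h2.2
      have hs1 := Classical.epsilon_spec (p := fun v => v ∈ W ∧ v ∈ e1) ⟨v1, hv11, hv12⟩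
      have hs2 := Classical.epsilon_spec (p := fun v => v ∈ W ∧ v ∈ e2) ⟨v2, hv21, hv22⟩
      have heq' : (Classical.epsilon fun v => v ∈ W ∧ v ∈ e1)
          = (Classical.epsilon fun v => v ∈ W ∧ v ∈ e2) := heq
      rw [heq'] at hs1
      obtain ⟨w, hw, he2eq⟩ := exists_adj_of_mem_edge h2.1 hs2.2
      rw [he2eq]
      exact mem_edge_eq hM h1.1 hs1.2 hw

/-- Bound when `M` has an edge inside `S`. -/
lemma bound_adj [Finite V] (hM : M.IsMatching) {x y : V} (hxy : M.Adj x y)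
    (S : Set V) (hx : x ∈ S) (hy : y ∈ S) (hS : S.ncard ≤ 3) :
    ({e ∈ M.edgeSet | ∃ v ∈ S, v ∈ e}).ncard ≤ 2 := by
  have hne : x ≠ y := (M.adj_sub hxy).ne
  have hsub : {e ∈ M.edgeSet | ∃ v ∈ S, v ∈ e} ⊆
      insert s(x, y) {e ∈ M.edgeSet | ∃ v ∈ S \ {x, y}, v ∈ e} := by
    rintro e ⟨he, v, hvS, hve⟩
    by_cases hvx : v = x
    · subst hvx; exact Set.mem_insert_iff.mpr (Or.inl (mem_edge_eq hM he hve hxy))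
    by_cases hvy : v = y
    · subst hvy
      refine Set.mem_insert_iff.mpr (Or.inl ?_)
      rw [mem_edge_eq hM he hve hxy.symm]; exact Sym2.eq_swap
    · exact Set.mem_insert_iff.mpr (Or.inr ⟨he, v, ⟨hvS, by simp only [Set.mem_insert_iff, Set.mem_singleton_iff]; tauto⟩, hve⟩)
  have h1 : ({e ∈ M.edgeSet | ∃ v ∈ S \ {x, y}, v ∈ e}).ncard ≤ (S \ {x, y}).ncard :=
    ncard_filter_le hM _
  have h2 : (S \ ({x, y} : Set V)).ncard = S.ncard - 2 := by
    rw [Set.ncard_diff (Set.insert_subset_iff.mpr ⟨hx, Set.singleton_subset_iff.mpr hy⟩) (Set.toFinite _), Set.ncard_pair hne]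
  have h3 := Set.ncard_le_ncard hsub (Set.toFinite _)
  have h4 := Set.ncard_insert_le s(x, y) {e ∈ M.edgeSet | ∃ v ∈ S \ {x, y}, v ∈ e}
  omega

/-- Bound when some vertex of `S` is not covered by `M`. -/
lemma bound_uncovered [Finite V] (hM : M.IsMatching) {x : V} (hx : ∀ w, ¬ M.Adj x w)
    (S : Set V) (hxS : x ∈ S) (hS : S.ncard ≤ 3) :
    ({e ∈ M.edgeSet | ∃ v ∈ S, v ∈ e}).ncard ≤ 2 := by
  have hsub : {e ∈ M.edgeSet | ∃ v ∈ S, v ∈ e} ⊆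
      {e ∈ M.edgeSet | ∃ v ∈ S \ {x}, v ∈ e} := by
    rintro e ⟨he, v, hvS, hve⟩
    refine ⟨he, v, ⟨hvS, ?_⟩, hve⟩
    intro hvx
    simp only [Set.mem_singleton_iff] at hvx
    subst hvx
    obtain ⟨w, hw, -⟩ := exists_adj_of_mem_edge he hve
    exact hx w hw
  have h1 := Set.ncard_le_ncard hsub (Set.toFinite _)
  have h2 := ncard_filter_le hM (S \ {x})
  have h3 : (S \ ({x} : Set V)).ncard = S.ncard - 1 := by
    rw [Set.ncard_diff (by simp [hxS]) (Set.toFinite _), Set.ncard_singleton]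
  omega

/-- `matchNum` is bounded above (finite vertex set). -/
lemma matchNum_bddAbove {W : Type*} [Finite W] (H : SimpleGraph W) :
    BddAbove {n | ∃ N : H.Subgraph, N.IsMatching ∧ N.edgeSet.ncard = n} := by
  refine ⟨Nat.card (Sym2 W), ?_⟩
  rintro n ⟨N, -, rfl⟩
  calc N.edgeSet.ncard ≤ (Set.univ : Set (Sym2 W)).ncard :=
        Set.ncard_le_ncard (Set.subset_univ _) Set.finite_univ
    _ = Nat.card (Sym2 W) := Set.ncard_univ _

/-- Key contradiction lemma. -/
lemma key [Finite V] (hM : M.IsMatching) (S : Set V)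
    (hE : ({e ∈ M.edgeSet | ∃ v ∈ S, v ∈ e}).ncard ≤ 2)
    (hmax : M.edgeSet.ncard = matchNum G)
    (hmu : 3 + matchNum (G.induce {x | x ∉ S}) ≤ matchNum G) : False := by
  classical
  set E := {e ∈ M.edgeSet | ∃ v ∈ S, v ∈ e} with hEdef
  let M' : (G.induce {x | x ∉ S}).Subgraph :=
  { verts := {v | ∃ w : {x | x ∉ S}, M.Adj v.1 w.1}
    Adj := fun u w => M.Adj u.1 w.1
    adj_sub := fun h => M.adj_sub h
    edge_vert := fun {u w} h => ⟨w, h⟩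
    symm := ⟨fun u w h => M.adj_symm h⟩ }
  have hM' : M'.IsMatching := by
    rintro v ⟨w, hw⟩
    refine ⟨w, hw, fun w' hw' => Subtype.ext ((hM (M.edge_vert hw)).unique hw' hw)⟩
  have himg : Sym2.map (Subtype.val : {x | x ∉ S} → V) '' M'.edgeSet = M.edgeSet \ E := by
    ext e
    constructor
    · rintro ⟨e', he', rfl⟩
      induction e' with
      | h u w =>
        simp only [Sym2.map_pair_eq]
        have hadj : M.Adj u.1 w.1 := he'
        refine ⟨hadj, ?_⟩
        rintro ⟨-, v, hvS, hve⟩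
        rcases Sym2.mem_iff.mp hve with rfl | rfl
        · exact u.2 hvS
        · exact w.2 hvS
    · rintro ⟨heM, hnot⟩
      induction e with
      | h u w =>
        rw [SimpleGraph.Subgraph.mem_edgeSet] at heM
        have hu : u ∉ S := fun h => hnot ⟨heM, u, h, Sym2.mem_mk_left _ _⟩
        have hw : w ∉ S := fun h => hnot ⟨heM, w, h, Sym2.mem_mk_right _ _⟩
        exact ⟨s(⟨u, hu⟩, ⟨w, hw⟩), heM, rfl⟩
  have hinj : Function.Injective (Sym2.map (Subtype.val : {x | x ∉ S} → V)) :=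
    Sym2.map.injective Subtype.val_injective
  have hcard : M'.edgeSet.ncard = (M.edgeSet \ E).ncard := by
    rw [← himg, Set.ncard_image_of_injective _ hinj]
  have hdiff : (M.edgeSet \ E).ncard = M.edgeSet.ncard - E.ncard :=
    Set.ncard_diff (Set.sep_subset _ _) (Set.toFinite _)
  have hle : M'.edgeSet.ncard ≤ matchNum (G.induce {x | x ∉ S}) :=
    le_csSup (matchNum_bddAbove _) ⟨M', hM', rfl⟩
  omega

end Aux

/-- Let `M` be a maximum matching of `G` and let `T = {a, b, c}` be a triangle of `G` such that
`μ(G) ≥ 3 + μ(G − V(T))`. Then no edge of `M` has both endpoints in `T`, and every vertex of `T`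
is covered by `M`. -/
theorem stmt_12 {V : Type*} [Fintype V] (G : SimpleGraph V)
    (M : G.Subgraph) (hM : M.IsMatching) (hmax : M.edgeSet.ncard = matchNum G)
    (a b c : V) (hab : G.Adj a b) (hbc : G.Adj b c) (hac : G.Adj a c)
    (hmu : 3 + matchNum (G.induce {x | x ∉ ({a, b, c} : Set V)}) ≤ matchNum G) :
    (∀ x y, M.Adj x y → ¬ (x ∈ ({a, b, c} : Set V) ∧ y ∈ ({a, b, c} : Set V))) ∧
    a ∈ M.support ∧ b ∈ M.support ∧ c ∈ M.support := by
  have hS3 : ({a, b, c} : Set V).ncard ≤ 3 := by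
    apply (Set.ncard_insert_le _ _).trans
    have := Set.ncard_insert_le b ({c} : Set V)
    simp only [Set.ncard_singleton] at this ⊢
    omega
  refine ⟨?_, ?_, ?_, ?_⟩
  · rintro x y hxy ⟨hx, hy⟩
    exact (key hM _ (bound_adj hM hxy _ hx hy hS3) hmax hmu).elim
  · by_contra h
    rw [SimpleGraph.Subgraph.mem_support] at h
    push_neg at h
    exact key hM _ (bound_uncovered hM h _ (by simp) hS3) hmax hmu
  · by_contra h
    rw [SimpleGraph.Subgraph.mem_support] at h
    push_neg at h
    exact key hM _ (bound_uncovered hM h _ (by simp) hS3) hmax hmu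
  · by_contra h
    rw [SimpleGraph.Subgraph.mem_support] at h
    push_neg at h
    exact key hM _ (bound_uncovered hM h _ (by simp) hS3) hmax hmu
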